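/- Let R be a reduced elliptic root system of rank l with fundamental-set Π ∪ {a}. Then for every α ∈ R there exists m ∈ ℤ ∖ {0} such that α + ma ∈ R. -/

import Mathlib

/- ## Preliminaries: extended affine root systems (Saito) -/

noncomputable section

open Set

/-- The reflection `s_v : z ↦ z - (v^∨, z) v = z - (2 (v,z)/(v,v)) v` associated to a
bilinear form `B` and a vector `v`.  (When `B v v = 0` this is the identity, by the
`division by zero = 0` convention; reflections are only ever used at non-isotropic `v`.) -/
def srefl {V : Type*} [AddCommGroup V] [Module ℝ V]
    (B : LinearMap.BilinForm ℝ V) (v : V) : Module.End ℝ V :=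
  LinearMap.id - (((2 * (B v v)⁻¹) • (B v)).smulRight v)

/-- The Weyl group `W_S` generated by the reflections in the elements of `S`
(realized as the multiplicative closure; each generator is an involution, so this
agrees with the generated group). -/
def weyl {V : Type*} [AddCommGroup V] [Module ℝ V]
    (B : LinearMap.BilinForm ℝ V) (S : Set V) : Submonoid (Module.End ℝ V) :=
  Submonoid.closure (srefl B '' S)

/-- The orbit `W_S · α`. -/
def worbit {V : Type*} [AddCommGroup V] [Module ℝ V]
    (B : LinearMap.BilinForm ℝ V) (S : Set V) (α : V) : Set V :=
  {v | ∃ w ∈ weyl B S, w α = v}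

/-- `V⁰`, the set of isotropic vectors. -/
def nullSet {V : Type*} [AddCommGroup V] [Module ℝ V]
    (B : LinearMap.BilinForm ℝ V) : Set V := {v | B v v = 0}

/-- `ℤR`, the subgroup of `V` generated by `R`. -/
def zspan {V : Type*} [AddCommGroup V] (R : Set V) : AddSubgroup V :=
  AddSubgroup.closure R

/-- `ℤ≥0 Π`, the set of nonnegative-integer linear combinations of elements of `Π`. -/
def nnspan {V : Type*} [AddCommMonoid V] (P : Set V) : Set V :=
  (AddSubmonoid.closure P : Set V)

/-- `(R, V)` is an `n`-extended affine root system of rank `l` (K. Saito). -/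
structure IsEARS {V : Type*} [AddCommGroup V] [Module ℝ V]
    (B : LinearMap.BilinForm ℝ V) (R : Set V) (l n : ℕ) : Prop where
  rank_pos : 1 ≤ l
  findim : FiniteDimensional ℝ V
  symm : ∀ u v, B u v = B v u
  posSemidef : ∀ v, 0 ≤ B v v
  dim_eq : Module.finrank ℝ V = l + n
  null_eq : nullSet B = (LinearMap.ker B : Set V)
  dim_null : Module.finrank ℝ (LinearMap.ker B) = n
  /-- (AX1), first half -/
  root_nonisotropic : ∀ α ∈ R, B α α ≠ 0
  /-- (AX1), second half -/
  span_eq_top : Submodule.span ℝ R = ⊤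
  /-- (AX2) -/
  free : Module.Free ℤ (zspan R)
  /-- (AX2) -/
  rank_eq : Module.finrank ℤ (zspan R) = l + n
  /-- (AX3): `(α^∨, β) ∈ ℤ` -/
  integral : ∀ α ∈ R, ∀ β ∈ R, ∃ m : ℤ, 2 * B α β = (m : ℝ) * B α α
  /-- (AX4) -/
  reflect : ∀ α ∈ R, srefl B α '' R = R
  /-- (AX5) -/
  connected : ∀ S' ⊆ R, S'.Nonempty → S' ≠ R → ∃ x ∈ S', ∃ y ∈ R \ S', B x y ≠ 0

/-- `R` is reduced, i.e. `R ∩ 2R = ∅`. -/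
def IsReducedRS {V : Type*} [AddCommGroup V] [Module ℝ V] (R : Set V) : Prop :=
  ∀ α ∈ R, (2 : ℤ) • α ∉ R

/-- `Π₀` is a base (with `m` elements) of the root system `R₀`:
`Π₀ ⊆ R₀`, `Π₀` consists of `m` linearly independent elements, and
`R₀ = (R₀ ∩ ℤ≥0 Π₀) ∪ (R₀ ∩ ℤ≤0 Π₀)`. -/
def IsBaseSet {M : Type*} [AddCommGroup M] [Module ℝ M] (R₀ P₀ : Set M) (m : ℕ) : Prop :=
  P₀ ⊆ R₀ ∧ P₀.Finite ∧ P₀.ncard = m ∧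
  LinearIndependent ℝ ((↑) : P₀ → M) ∧
  R₀ = (R₀ ∩ nnspan P₀) ∪ (R₀ ∩ (-(nnspan P₀)))

/-- The bilinear form induced on a quotient `V ⧸ W` by a form vanishing on `W`. -/
def quotForm {V : Type*} [AddCommGroup V] [Module ℝ V]
    (W : Submodule ℝ V) (B : LinearMap.BilinForm ℝ V)
    (h1 : ∀ w ∈ W, B w = 0) (h2 : ∀ v : V, ∀ w ∈ W, B v w = 0) :
    LinearMap.BilinForm ℝ (V ⧸ W) :=
  Submodule.liftQ W
    { toFun := fun v => Submodule.liftQ W (B v) (fun w hw => LinearMap.mem_ker.mpr (h2 v w hw))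
      map_add' := fun u v => by
        ext x
        simp
      map_smul' := fun c v => by
        ext x
        simp }
    (fun w hw => by
      simp only [LinearMap.mem_ker]
      ext x
      simp [h1 w hw])

end

/-- A fundamental-set `Π ∪ {a}` of a reduced elliptic root system `R` of rank `l`:
(FS1) `a ∈ (ℤR)⁰` and `(ℤR)⁰ = ℤa ⊕ ℤb` for some `b`;
(FS2) `|Π| = l+1`, `Π ⊆ R` and `π_a(Π)` is a base of the affine root system `π_a(R)`. -/
def IsFundamentalSet {V : Type*} [AddCommGroup V] [Module ℝ V]
    (B : LinearMap.BilinForm ℝ V) (R : Set V) (l : ℕ) (P : Set V) (a : V) : Prop :=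
  a ∈ zspan R ∧ B a a = 0 ∧
  (∃ b : V, b ∈ zspan R ∧ B b b = 0 ∧
    ((zspan R : Set V) ∩ nullSet B = {v | ∃ m n : ℤ, v = m • a + n • b}) ∧
    (∀ m n : ℤ, m • a + n • b = 0 → m = 0 ∧ n = 0)) ∧
  P ⊆ R ∧ P.Finite ∧ P.ncard = l + 1 ∧
  IsBaseSet ((Submodule.span ℝ {a}).mkQ '' R) ((Submodule.span ℝ {a}).mkQ '' P) (l + 1)
section StmtAux
variable {V : Type*} [AddCommGroup V] [Module ℝ V] {B : LinearMap.BilinForm ℝ V} {R : Set V} {l : ℕ}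

lemma srefl_apply (B : LinearMap.BilinForm ℝ V) (v z : V) :
    srefl B v z = z - ((2 * (B v v)⁻¹) * B v z) • v := by
  simp [srefl, LinearMap.sub_apply, LinearMap.smulRight_apply, smul_eq_mul]

lemma refl_mem (hE : IsEARS B R l 2) {β δ : V} (hβ : β ∈ R) (hδ : δ ∈ R)
    {k : ℝ} (hk : 2 * B β δ = k * B β β) : δ - k • β ∈ R := by
  have hne := hE.root_nonisotropic β hβ
  have h1 : srefl B β δ = δ - k • β := by
    rw [srefl_apply]
    congr 2
    field_simp
    linarith
  rw [← h1, ← hE.reflect β hβ]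
  exact ⟨δ, hδ, rfl⟩

lemma neg_mem (hE : IsEARS B R l 2) {δ : V} (hδ : δ ∈ R) : -δ ∈ R := by
  have h := refl_mem hE hδ hδ (k := 2) (by ring)
  have : δ - (2:ℝ) • δ = -δ := by
    rw [two_smul]; abel
  rwa [this] at h

lemma transl (hE : IsEARS B R l 2) {β u δ : V} (hβ : β ∈ R) (hβu : β + u ∈ R)
    (hu : B u = 0) (hδ : δ ∈ R)
    {k : ℝ} (hk : 2 * B β δ = k * B β β) : δ - k • u ∈ R := by
  have hsym := hE.symm
  have hβu0 : B β u = 0 := by rw [hsym β u, hu]; rfl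
  have hBadd : B (β + u) = B β := by rw [map_add, hu, add_zero]
  have hc : B (β + u) (β + u) = B β β := by
    rw [hBadd, map_add, hβu0, add_zero]
  have h1 : 2 * B (β + u) δ = k * B (β + u) (β + u) := by
    rw [hc, hBadd]; exact hk
  have hγ1 : δ - k • (β + u) ∈ R := refl_mem hE hβu hδ h1
  have h2 : 2 * B β (δ - k • (β + u)) = (-k) * B β β := by
    rw [map_sub, map_smul, map_add, hβu0, add_zero]
    simp only [smul_eq_mul]
    linarith
  have hγ2 := refl_mem hE hβ hγ1 h2
  have : δ - k • (β + u) - (-k) • β = δ - k • u := by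
    rw [smul_add, neg_smul]; abel
  rwa [this] at hγ2

end StmtAux
set_option maxHeartbeats 1000000 in
/-- In a reduced elliptic root system with fundamental-set `Π ∪ {a}`,
every root `α` has a translate `α + m a ∈ R` with `m` a nonzero integer. -/
theorem stmt6 {V : Type*} [AddCommGroup V] [Module ℝ V]
    (B : LinearMap.BilinForm ℝ V) (R : Set V) (l : ℕ)
    (hE : IsEARS B R l 2) (hred : IsReducedRS R)
    (P : Set V) (a : V) (hfs : IsFundamentalSet B R l P a) :
    ∀ α ∈ R, ∃ m : ℤ, m ≠ 0 ∧ α + m • a ∈ R := by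
  classical
  obtain ⟨haR, haa, ⟨b, hbR, hbb, hnull, hind⟩, hPR, hPfin, hPcard, hbase⟩ := hfs
  obtain ⟨hQsub, hQfin, hQcard, hQind, hQdecomp⟩ := hbase
  have hsym := hE.symm
  haveI hFD : FiniteDimensional ℝ V := hE.findim
  haveI := hPfin.fintype
  set W : Submodule ℝ V := Submodule.span ℝ {a} with hW
  set π : V →ₗ[ℝ] V ⧸ W := W.mkQ with hπ
  have haK : B a = 0 := by
    have h1 : a ∈ nullSet B := haa
    rw [hE.null_eq] at h1
    exact LinearMap.mem_ker.mp h1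
  have hBa0 : ∀ z : V, B z a = 0 := fun z => by rw [hsym z a, haK]; rfl
  have ha0 : a ≠ 0 := by
    intro h
    exact one_ne_zero ((hind 1 0 (by simp [h])).1)
  haveI := (hPfin.image ⇑π).fintype
  have hQcard' : Fintype.card (↥(⇑π '' P)) = l + 1 := by
    rw [← Nat.card_eq_fintype_card, Nat.card_coe_set_eq]
    exact hQcard
  have hdimQ : Module.finrank ℝ (V ⧸ W) = l + 1 := by
    have h1 := Submodule.finrank_quotient_add_finrank W
    have h2 : Module.finrank ℝ ↥W = 1 := by rw [hW]; exact finrank_span_singleton ha0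
    rw [h2, hE.dim_eq] at h1
    omega
  have hspanQ : Submodule.span ℝ (⇑π '' P) = ⊤ := by
    haveI : Nonempty (↥(⇑π '' P)) := by
      rw [← Fintype.card_pos_iff, hQcard']; omega
    have h2 := hQind.span_eq_top_of_card_eq_finrank (by rw [hQcard', hdimQ])
    rwa [Subtype.range_coe] at h2
  have hinjP : Set.InjOn ⇑π P := Set.injOn_of_ncard_image_eq (by rw [hQcard, hPcard]) hPfin
  set F : (↥P ⊕ Unit) → V := Sum.elim (fun p => ↑p) (fun _ => a) with hF
  have hπa : π a = 0 := by
    have ha : a ∈ W := by rw [hW]; exact Submodule.mem_span_singleton_self a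
    simpa [hπ] using (Submodule.Quotient.mk_eq_zero W).mpr ha
  set em : ↥P → V ⧸ W := fun p => π ↑p with hem
  have hemind : LinearIndependent ℝ em := by
    have einj : Function.Injective (fun p : ↥P => (⟨π ↑p, Set.mem_image_of_mem _ p.2⟩ : ↥(⇑π '' P))) := by
      intro p1 p2 h
      have := congrArg Subtype.val h
      exact Subtype.ext (hinjP p1.2 p2.2 this)
    exact hQind.comp _ einj
  have hFind : LinearIndependent ℝ F := by
    rw [Fintype.linearIndependent_iff]
    intro g hg
    have hg' : (∑ p : ↥P, g (Sum.inl p) • (↑p:V)) + g (Sum.inr ()) • a = 0 := by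
      rw [← hg, Fintype.sum_sum_type]
      simp [hF]
    have hg2 : ∑ p : ↥P, g (Sum.inl p) • em p = 0 := by
      have h3 := congrArg π hg'
      simpa [map_add, map_sum, map_smul, hπa, hem] using h3
    have hzl : ∀ p, g (Sum.inl p) = 0 := Fintype.linearIndependent_iff.mp hemind _ hg2
    have hzr : g (Sum.inr ()) = 0 := by
      have h4 : g (Sum.inr ()) • a = 0 := by
        have := hg'
        rw [Finset.sum_eq_zero (fun p _ => by rw [hzl p, zero_smul])] at this
        rwa [zero_add] at this
      rcases smul_eq_zero.mp h4 with h | h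
      · exact h
      · exact absurd h ha0
    intro i
    cases i with
    | inl p => exact hzl p
    | inr u => cases u; exact hzr
  have hFspan : ⊤ ≤ Submodule.span ℝ (Set.range F) := by
    intro x _
    have haS : a ∈ Submodule.span ℝ (Set.range F) := Submodule.subset_span ⟨Sum.inr (), rfl⟩
    have hPS : ∀ p : ↥P, (↑p:V) ∈ Submodule.span ℝ (Set.range F) :=
      fun p => Submodule.subset_span ⟨Sum.inl p, rfl⟩
    have h1 : π x ∈ Submodule.span ℝ (⇑π '' P) := by rw [hspanQ]; trivial
    have h2 : Submodule.span ℝ (⇑π '' P) ≤ Submodule.map π (Submodule.span ℝ (Set.range F)) := by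
      rw [Submodule.span_le]
      rintro y ⟨p, hp, rfl⟩
      exact ⟨p, hPS ⟨p, hp⟩, rfl⟩
    obtain ⟨s, hsS, hsx⟩ := h2 h1
    have hxs : x - s ∈ W := by
      have h3 : x - s ∈ LinearMap.ker π := LinearMap.mem_ker.mpr (by rw [map_sub, hsx, sub_self])
      rwa [hπ, Submodule.ker_mkQ] at h3
    have hWS : W ≤ Submodule.span ℝ (Set.range F) := by
      rw [hW, Submodule.span_le]
      intro z hz
      rw [Set.mem_singleton_iff] at hz
      rw [hz]
      exact haS
    have : x = s + (x - s) := by abel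
    rw [this]
    exact Submodule.add_mem _ hsS (hWS hxs)
  obtain ⟨E, hEcoe⟩ : ∃ E : Module.Basis (↥P ⊕ Unit) ℝ V, ⇑E = F :=
    ⟨Module.Basis.mk hFind hFspan, Module.Basis.coe_mk _ _⟩
  have hrep : ∀ (m : ↥P → ℝ) (c : ℝ) (x : V), x = (∑ p, m p • (↑p:V)) + c • a →
      (∀ p, E.equivFun x (Sum.inl p) = m p) ∧ E.equivFun x (Sum.inr ()) = c := by
    intro m c x hx
    have hx' : x = E.equivFun.symm (Sum.elim m fun _ => c) := by
      rw [Module.Basis.equivFun_symm_apply, Fintype.sum_sum_type]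
      simpa [hEcoe, hF] using hx
    have h2 : E.equivFun x = Sum.elim m fun _ => c := by
      rw [hx', LinearEquiv.apply_symm_apply]
    exact ⟨fun p => by rw [h2]; rfl, by rw [h2]; rfl⟩
  have hNN : ∀ x ∈ AddSubmonoid.closure (⇑π '' P), ∃ n : ↥P → ℕ, x = ∑ p : ↥P, n p • em p := by
    intro x hx
    induction hx using AddSubmonoid.closure_induction with
    | mem y hy =>
      obtain ⟨p, hp, rfl⟩ := hy
      refine ⟨fun r => if r = ⟨p, hp⟩ then 1 else 0, ?_⟩
      have e1 : ∀ r : ↥P, (if r = ⟨p, hp⟩ then 1 else 0) • em r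
          = if r = ⟨p, hp⟩ then em r else 0 := by
        intro r
        split <;> simp
      rw [Finset.sum_congr rfl (fun r _ => e1 r), Finset.sum_ite_eq' Finset.univ]
      simp [hem]
    | zero =>
      exact ⟨0, by simp⟩
    | add y z _ _ hy hz =>
      obtain ⟨ny, hny⟩ := hy
      obtain ⟨nz, hnz⟩ := hz
      exact ⟨ny + nz, by rw [hny, hnz, ← Finset.sum_add_distrib]; simp [add_smul, add_nsmul]⟩
  have hF1 : ∀ α ∈ R, ∃ (n : ↥P → ℕ) (c : ℝ),
      α = (∑ p, ((n p : ℝ)) • (↑p:V)) + c • a ∨ -α = (∑ p, ((n p : ℝ)) • (↑p:V)) + c • a := by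
    intro α hα
    have lift : ∀ z : V, π z ∈ nnspan (⇑π '' P) →
        ∃ (n : ↥P → ℕ) (c : ℝ), z = (∑ p, ((n p:ℝ)) • (↑p:V)) + c • a := by
      intro z hz
      obtain ⟨n, hn⟩ := hNN _ hz
      have h2 : π (z - ∑ p, ((n p:ℝ)) • (↑p:V)) = 0 := by
        rw [map_sub, map_sum]
        have h3 : ∀ p : ↥P, π (((n p:ℝ)) • (↑p:V)) = n p • em p := by
          intro p
          rw [map_smul, Nat.cast_smul_eq_nsmul]
        have h4 : ∑ p : ↥P, π (((n p:ℝ)) • (↑p:V)) = ∑ p : ↥P, n p • em p :=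
          Finset.sum_congr rfl (fun p _ => h3 p)
        rw [h4, ← hn, sub_self]
      have h4 : z - ∑ p, ((n p:ℝ)) • (↑p:V) ∈ W := by
        have h5 : _ ∈ LinearMap.ker π := LinearMap.mem_ker.mpr h2
        rwa [hπ, Submodule.ker_mkQ] at h5
      rw [hW, Submodule.mem_span_singleton] at h4
      obtain ⟨c, hc⟩ := h4
      refine ⟨n, c, ?_⟩
      have hc2 : z - ∑ p, ((n p:ℝ)) • (↑p:V) = c • a := hc.symm
      rw [sub_eq_iff_eq_add'] at hc2
      exact hc2
    have h1 : π α ∈ (⇑π '' R) := Set.mem_image_of_mem _ hα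
    rw [hQdecomp] at h1
    rcases h1 with ⟨_, h2⟩ | ⟨_, h2⟩
    · obtain ⟨n, c, h3⟩ := lift α h2
      exact ⟨n, c, Or.inl h3⟩
    · rw [Set.mem_neg] at h2
      have h3 : π (-α) ∈ nnspan (⇑π '' P) := by rwa [map_neg]
      obtain ⟨n, c, h4⟩ := lift (-α) h3
      exact ⟨n, c, Or.inr h4⟩
  -- linear independence of a and b over ℝ
  have hab : ∀ s : ℝ, b ≠ s • a := by
    intro s hbs
    haveI hfree := hE.free
    have hrk := hE.rank_eq
    haveI : Module.Finite ℤ ↥(zspan R) := by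
      apply Module.finite_of_rank_eq_nat (n := l + 2)
      have h1 : (Module.rank ℤ ↥(zspan R)) < Cardinal.aleph0 := by
        by_contra hc
        push_neg at hc
        have h2 : Module.finrank ℤ ↥(zspan R) = 0 := by
          simp [Module.finrank, Cardinal.toNat_apply_of_aleph0_le hc]
        omega
      obtain ⟨nn, hnn⟩ := Cardinal.lt_aleph0.mp h1
      have h3 : Module.finrank ℤ ↥(zspan R) = nn := by
        simp [Module.finrank, hnn]
      rw [hnn]
      norm_cast
      omega
    set ι' := Module.Free.ChooseBasisIndex ℤ ↥(zspan R) with hι'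
    set eb : Module.Basis ι' ℤ ↥(zspan R) := Module.Free.chooseBasis ℤ ↥(zspan R) with heb
    set g : ι' → V := fun i => ↑(eb i) with hg
    have hxrep : ∀ x : ↥(zspan R), (x:V) = ∑ i, ((eb.repr x i : ℤ):ℝ) • g i := by
      intro x
      conv_lhs => rw [← eb.sum_repr x]
      rw [AddSubmonoidClass.coe_finset_sum]
      refine Finset.sum_congr rfl (fun i _ => ?_)
      rw [Int.cast_smul_eq_zsmul]
      rfl
    have hspang : ⊤ ≤ Submodule.span ℝ (Set.range g) := by
      rw [← hE.span_eq_top, Submodule.span_le]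
      intro x hx
      have hx' : x ∈ zspan R := AddSubgroup.subset_closure hx
      have h1 := hxrep ⟨x, hx'⟩
      have h3 : (∑ i, ((eb.repr ⟨x, hx'⟩ i : ℤ):ℝ) • g i) ∈ Submodule.span ℝ (Set.range g) :=
        Submodule.sum_mem _ (fun i _ => Submodule.smul_mem _ _ (Submodule.subset_span ⟨i, rfl⟩))
      rwa [← h1] at h3
    have hcardg : Fintype.card ι' = Module.finrank ℝ V := by
      rw [hE.dim_eq, ← hrk, Module.finrank_eq_card_chooseBasisIndex]
    have hgind : LinearIndependent ℝ g :=
      linearIndependent_of_top_le_span_of_card_eq_finrank hspang hcardg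
    set av : ↥(zspan R) := ⟨a, haR⟩ with hav
    set bv : ↥(zspan R) := ⟨b, hbR⟩ with hbv
    have hcoords : ∀ i, ((eb.repr bv i : ℤ):ℝ) = s * ((eb.repr av i : ℤ):ℝ) := by
      have h1 : ∑ i, (((eb.repr bv i : ℤ):ℝ) - s * ((eb.repr av i : ℤ):ℝ)) • g i = 0 := by
        calc ∑ i, (((eb.repr bv i : ℤ):ℝ) - s * ((eb.repr av i : ℤ):ℝ)) • g i
            = (∑ i, ((eb.repr bv i : ℤ):ℝ) • g i) - s • (∑ i, ((eb.repr av i : ℤ):ℝ) • g i) := by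
              rw [Finset.smul_sum, ← Finset.sum_sub_distrib]
              exact Finset.sum_congr rfl (fun i _ => by rw [sub_smul, smul_smul])
          _ = b - s • a := by rw [← hxrep bv, ← hxrep av]
          _ = 0 := by rw [hbs, sub_self]
      have h3 := Fintype.linearIndependent_iff.mp hgind _ h1
      intro i
      have := h3 i
      linarith
    have hja : ∃ j, eb.repr av j ≠ 0 := by
      by_contra hno
      push_neg at hno
      apply ha0
      have := hxrep av
      rw [Finset.sum_eq_zero (fun i _ => by rw [hno i]; simp)] at this
      exact this
    obtain ⟨j, hj⟩ := hja
    have hintid : ∀ i, eb.repr av j * eb.repr bv i = eb.repr bv j * eb.repr av i := by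
      intro i
      have h1 := hcoords i
      have h2 := hcoords j
      have : ((eb.repr av j : ℤ):ℝ) * ((eb.repr bv i : ℤ):ℝ)
           = ((eb.repr bv j : ℤ):ℝ) * ((eb.repr av i : ℤ):ℝ) := by
        rw [h1, h2]; ring
      exact_mod_cast this
    have hzero : (eb.repr av j) • bv - (eb.repr bv j) • av = 0 := by
      apply eb.repr.injective
      rw [map_sub, map_smul, map_smul, map_zero]
      ext i
      simp only [Finsupp.coe_sub, Finsupp.coe_smul, Pi.sub_apply, Pi.smul_apply,
        smul_eq_mul, Finsupp.coe_zero, Pi.zero_apply]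
      have := hintid i
      linarith
    have hzeroV : (eb.repr av j) • b - (eb.repr bv j) • a = 0 := by
      have := congrArg (Subtype.val) hzero
      simpa [hav, hbv] using this
    have := (hind (-(eb.repr bv j)) (eb.repr av j) (by rw [neg_zsmul, neg_add_eq_sub]; exact hzeroV)).2
    exact hj this
  -- existence of a seed pair
  have seed : ∃ β ∈ R, ∃ m : ℤ, m ≠ 0 ∧ β + m • a ∈ R := by
    by_contra hs
    push_neg at hs
    have H : ∀ β ∈ R, ∀ γ ∈ R, ∀ r : ℝ, γ = β + r • a → γ = β := by
      intro β hβ γ hγ r hr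
      by_contra hnegoal
      have hr0 : r ≠ 0 := by
        rintro rfl
        rw [zero_smul, add_zero] at hr
        exact hnegoal hr
      have hmem : r • a ∈ ((zspan R : Set V) ∩ nullSet B) := by
        constructor
        · have h1 : r • a = γ - β := by rw [hr]; abel
          rw [h1]
          exact AddSubgroup.sub_mem _ (AddSubgroup.subset_closure hγ) (AddSubgroup.subset_closure hβ)
        · show B (r • a) (r • a) = 0
          rw [map_smul, hBa0]
          simp
      rw [hnull] at hmem
      obtain ⟨m, nn, hmn⟩ := hmem
      have hnn0 : nn = 0 := by
        by_contra h0
        apply hab (((nn:ℝ))⁻¹ * (r - (m:ℝ)))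
        have h1 : (nn:ℝ) • b = (r - (m:ℝ)) • a := by
          have h2 : r • a = (m:ℝ) • a + (nn:ℝ) • b := by
            rw [hmn, Int.cast_smul_eq_zsmul ℝ m a, Int.cast_smul_eq_zsmul ℝ nn b]
          rw [sub_smul]
          rw [h2]
          abel
        rw [mul_smul, ← h1, smul_smul]
        rw [inv_mul_cancel₀ (by exact_mod_cast h0), one_smul]
      rw [hnn0] at hmn
      have hra : r • a = m • a := by rw [hmn, zero_zsmul, add_zero]
      have hm0 : m ≠ 0 := by
        rintro rfl
        rw [zero_zsmul] at hra
        rcases smul_eq_zero.mp hra with h | h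
        · exact hr0 h
        · exact ha0 h
      exact hs β hβ m hm0 (by rw [← hra, ← hr]; exact hγ)
    -- the height induction
    have key : ∀ t : ℕ, ∀ α ∈ R, ∀ n : ↥P → ℕ, ∀ c : ℝ,
        α = (∑ p, ((n p:ℝ)) • (↑p:V)) + c • a → (∑ p, n p) = t → c = 0 := by
      intro t
      induction t using Nat.strong_induction_on with
      | _ t IH =>
      intro α hα n c hrepα hsum
      have hααpos : 0 < B α α :=
        lt_of_le_of_ne (hE.posSemidef α) (Ne.symm (hE.root_nonisotropic α hα))
      have hBexp : ∀ z : V, B z α = ∑ p, (n p:ℝ) * B z ↑p := by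
        intro z
        rw [hrepα, map_add, map_smul, hBa0, map_sum]
        simp [smul_eq_mul]
      rcases Nat.eq_zero_or_pos t with ht0 | htpos
      · exfalso
        have hn0 : ∀ p : ↥P, n p = 0 := by
          intro p
          have h1 : ∑ p, n p = 0 := by rw [hsum, ht0]
          exact Finset.sum_eq_zero_iff.mp h1 p (Finset.mem_univ p)
        have hα0 : α = c • a := by
          rw [hrepα, Finset.sum_eq_zero (fun p _ => by rw [hn0 p]; simp), zero_add]
        have : B α α = 0 := by
          rw [hα0, map_smul, hBa0]
          simp
        linarith
      · have hsumpos : 0 < ∑ p, (n p:ℝ) * B α ↑p := by rw [← hBexp α]; exact hααpos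
        have hexq : ∃ q : ↥P, 0 < (n q:ℝ) * B α ↑q := by
          by_contra hno2
          push_neg at hno2
          have := Finset.sum_nonpos (fun q (_ : q ∈ Finset.univ) => hno2 q)
          linarith
        obtain ⟨q, hq⟩ := hexq
        have hqR : (↑q:V) ∈ R := hPR q.2
        have hBαq : 0 < B α ↑q := by
          rcases le_or_gt (B α ↑q) 0 with h | h
          · have hge : (0:ℝ) ≤ (n q:ℝ) := Nat.cast_nonneg _
            nlinarith [hq, hge]
          · exact h
        have hnq1 : 1 ≤ n q := by
          rcases Nat.eq_zero_or_pos (n q) with h | h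
          · rw [h] at hq; simp at hq
          · exact h
        have hBqq : 0 < B ↑q ↑q :=
          lt_of_le_of_ne (hE.posSemidef _) (Ne.symm (hE.root_nonisotropic _ hqR))
        obtain ⟨k, hk⟩ := hE.integral ↑q hqR α hα
        have hkpos : 0 < (k:ℝ) := by
          have h1 : 0 < B ↑q α := by rw [hsym ↑q α]; exact hBαq
          nlinarith
        have hk1 : (1:ℤ) ≤ k := by exact_mod_cast hkpos
        have hγR : α - (k:ℝ) • ↑q ∈ R := refl_mem hE hqR hα hk
        set γ : V := α - (k:ℝ) • ↑q with hγdef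
        set m' : ↥P → ℝ := fun p => (n p:ℝ) - (if p = q then (k:ℝ) else 0) with hm'
        have hγrep : γ = (∑ p, m' p • (↑p:V)) + c • a := by
          have h1 : ∑ p, m' p • (↑p:V) = (∑ p, (n p:ℝ) • (↑p:V)) - (k:ℝ) • ↑q := by
            rw [hm']
            simp only [sub_smul, ite_smul, zero_smul]
            rw [Finset.sum_sub_distrib]
            congr 1
            rw [Finset.sum_ite_eq' Finset.univ q]
            simp
          rw [h1, hγdef, hrepα]
          abel
        obtain ⟨hγc1, hγc2⟩ := hrep m' c γ hγrep
        obtain ⟨n', c', hcase⟩ := hF1 γ hγR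
        rcases hcase with hposγ | hnegγ
        · obtain ⟨h1, h2⟩ := hrep (fun p => (n' p:ℝ)) c' γ hposγ
          have hc' : c' = c := by rw [← h2, hγc2]
          have hcoord : ∀ p, (n' p:ℝ) = m' p := fun p => by rw [← h1 p, hγc1 p]
          have hcq : (n' q:ℝ) = (n q:ℝ) - (k:ℝ) := by
            have h4 : m' q = (n q:ℝ) - (k:ℝ) := by simp [hm']
            rw [← h4]
            exact hcoord q
          have hcp : ∀ p, p ≠ q → n' p = n p := by
            intro p hp
            have h4 : m' p = (n p:ℝ) := by simp [hm', hp]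
            have h3 := hcoord p
            rw [h4] at h3
            exact_mod_cast h3
          have hlt : n' q < n q := by
            have h3 : (n' q:ℝ) < (n q:ℝ) := by rw [hcq]; linarith
            exact_mod_cast h3
          have hsum' : (∑ p, n' p) < t := by
            rw [← hsum]
            apply Finset.sum_lt_sum
            · intro p _
              rcases eq_or_ne p q with rfl | hpq
              · exact le_of_lt hlt
              · rw [hcp p hpq]
            · exact ⟨q, Finset.mem_univ q, hlt⟩
          exact IH _ hsum' γ hγR n' c (by rw [← hc']; exact hposγ) rfl
        · obtain ⟨h1, h2⟩ := hrep (fun p => (n' p:ℝ)) c' (-γ) hnegγ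
          have hcoord : ∀ p, m' p = -(n' p:ℝ) := by
            intro p
            have h3 : E.equivFun (-γ) (Sum.inl p) = (n' p:ℝ) := h1 p
            rw [map_neg] at h3
            have h4 : -(E.equivFun γ (Sum.inl p)) = (n' p:ℝ) := h3
            rw [hγc1 p] at h4
            linarith
          have hzero' : ∀ p, p ≠ q → n p = 0 := by
            intro p hp
            have h4 : m' p = (n p:ℝ) := by simp [hm', hp]
            have h3 := hcoord p
            rw [h4] at h3
            have h5 : (0:ℝ) ≤ (n p:ℝ) := Nat.cast_nonneg _
            have h6 : (0:ℝ) ≤ (n' p:ℝ) := Nat.cast_nonneg _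
            have h7 : (n p:ℝ) = 0 := by linarith
            exact_mod_cast h7
          set T : ℕ := n q with hT
          have hαq : α = ((T:ℝ)) • (↑q:V) + c • a := by
            rw [hrepα]
            congr 1
            rw [Finset.sum_eq_single q]
            · intro p _ hp
              rw [hzero' p hp]
              simp
            · intro h
              exact absurd (Finset.mem_univ q) h
          have hBq : B α ↑q = (T:ℝ) * B ↑q ↑q := by
            rw [hsym α ↑q, hBexp ↑q, Finset.sum_eq_single q]
            · intro p _ hp
              rw [hzero' p hp]
              simp
            · intro h
              exact absurd (Finset.mem_univ q) h
          have hBαα : B α α = ((T:ℝ))^2 * B ↑q ↑q := by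
            rw [hBexp α, Finset.sum_eq_single q, hBq]
            · ring
            · intro p _ hp
              rw [hzero' p hp]
              simp
            · intro h
              exact absurd (Finset.mem_univ q) h
          obtain ⟨k₂, hk₂⟩ := hE.integral α hα ↑q hqR
          have hTpos : (0:ℝ) < (T:ℝ) := by
            have : (1:ℝ) ≤ (T:ℝ) := by exact_mod_cast hnq1
            linarith
          have hTk : (k₂:ℝ) * (T:ℝ) = 2 := by
            rw [hBq, hBαα] at hk₂
            have h3 : (T:ℝ) * B ↑q ↑q ≠ 0 := by positivity
            have h4 : 2 * ((T:ℝ) * B ↑q ↑q) = ((k₂:ℝ) * (T:ℝ)) * ((T:ℝ) * B ↑q ↑q) := by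
              rw [hk₂]; ring
            exact (mul_right_cancel₀ h3 h4).symm
          have hTk' : k₂ * (T:ℤ) = 2 := by exact_mod_cast hTk
          have hT12 : T = 1 ∨ T = 2 := by
            have h3 : (T:ℤ) ∣ 2 := Dvd.intro_left k₂ hTk'
            have h4 : (T:ℤ) ≤ 2 := Int.le_of_dvd (by norm_num) h3
            have h4' : T ≤ 2 := by exact_mod_cast h4
            have h5 : 1 ≤ T := hnq1
            interval_cases T
            · exact Or.inl rfl
            · exact Or.inr rfl
          rcases hT12 with hT1 | hT2
          · have hαq1 : α = ↑q + c • a := by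
              rw [hαq, hT1]
              norm_num
            have h3 := H ↑q hqR α hα c hαq1
            rw [h3] at hαq1
            have h4 : c • a = 0 := by
              have := hαq1
              nth_rewrite 1 [← add_zero (↑q:V)] at this
              exact (add_left_cancel this).symm
            rcases smul_eq_zero.mp h4 with h | h
            · exact h
            · exact absurd h ha0
          · exfalso
            have hk₂1 : k₂ = 1 := by
              rw [hT2] at hTk'
              push_cast at hTk'
              omega
            have h5 : (↑q:V) - (k₂:ℝ) • α ∈ R := refl_mem hE hα hqR hk₂
            have h6 : (↑q:V) - (k₂:ℝ) • α = -(↑q + c • a) := by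
              rw [hk₂1, hαq, hT2]
              push_cast
              rw [one_smul]
              rw [two_smul]
              abel
            rw [h6] at h5
            have h7 : (↑q:V) + c • a ∈ R := by
              have h8 := neg_mem hE h5
              rwa [neg_neg] at h8
            have h9 := H ↑q hqR _ h7 c rfl
            have hc0 : c = 0 := by
              have h10 : c • a = 0 := by
                nth_rewrite 2 [← add_zero (↑q:V)] at h9
                exact add_left_cancel h9
              rcases smul_eq_zero.mp h10 with h | h
              · exact h
              · exact absurd h ha0
            have hα2q : α = (2:ℤ) • (↑q:V) := by
              rw [hαq, hT2, hc0]
              push_cast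
              rw [zero_smul, add_zero, two_smul, two_smul]
            exact hred ↑q hqR (hα2q ▸ hα)
    have negkey : ∀ α ∈ R, E.equivFun α (Sum.inr ()) = 0 := by
      intro α hα
      obtain ⟨n, c, hcase⟩ := hF1 α hα
      rcases hcase with h | h
      · rw [(hrep (fun p => ((n p:ℝ))) c α h).2]
        exact key _ α hα n c h rfl
      · have h2 := (hrep (fun p => ((n p:ℝ))) c (-α) h).2
        have hc := key _ (-α) (neg_mem hE hα) n c h rfl
        rw [map_neg] at h2
        have h3 : -(E.equivFun α (Sum.inr ())) = c := h2
        rw [hc] at h3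
        linarith
    have hspanzero : ∀ x ∈ Submodule.span ℝ R, E.equivFun x (Sum.inr ()) = 0 := by
      intro x hx
      induction hx using Submodule.span_induction with
      | mem y hy => exact negkey y hy
      | zero => simp
      | add y z _ _ hy hz =>
        rw [map_add]
        show E.equivFun y (Sum.inr ()) + E.equivFun z (Sum.inr ()) = 0
        rw [hy, hz, add_zero]
      | smul c y _ hy =>
        rw [map_smul]
        show c * E.equivFun y (Sum.inr ()) = 0
        rw [hy, mul_zero]
    have hA : E.equivFun a (Sum.inr ()) = 0 :=
      hspanzero a (by rw [hE.span_eq_top]; trivial)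
    have hA1 : E.equivFun a (Sum.inr ()) = 1 := by
      have h1 : a = E (Sum.inr ()) := by rw [hEcoe]; rfl
      rw [h1, Module.Basis.equivFun_self]
      simp
    rw [hA] at hA1
    exact one_ne_zero hA1.symm
  -- connectedness: propagate the seed to all roots
  obtain ⟨β, hβ, m₀, hm₀, hβm⟩ := seed
  intro α hα
  by_contra hno
  push_neg at hno
  set S' : Set V := {x | x ∈ R ∧ ∃ m : ℤ, m ≠ 0 ∧ x + m • a ∈ R} with hS'
  have hsub : S' ⊆ R := fun x hx => hx.1
  have hne : S'.Nonempty := ⟨β, hβ, m₀, hm₀, hβm⟩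
  have hneq : S' ≠ R := by
    intro h
    have h1 : α ∈ S' := h ▸ hα
    obtain ⟨_, m, hm, hmem⟩ := h1
    exact hno m hm hmem
  obtain ⟨x, hxS, y, hyRS, hBxy⟩ := hE.connected S' hsub hne hneq
  obtain ⟨hxR, m, hm, hxm⟩ := hxS
  obtain ⟨k, hk⟩ := hE.integral x hxR y hyRS.1
  have hk0 : k ≠ 0 := by
    rintro rfl
    rw [Int.cast_zero, zero_mul] at hk
    exact hBxy (by linarith)
  have hBma : B ((m:ℤ) • a) = 0 := by
    rw [map_zsmul, haK]
    simp
  have htr := transl hE hxR hxm hBma hyRS.1 hk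
  apply hyRS.2
  refine ⟨hyRS.1, -(k * m), neg_ne_zero.mpr (mul_ne_zero hk0 hm), ?_⟩
  have heq : y + (-(k * m)) • a = y - (k:ℝ) • ((m:ℤ) • a) := by
    rw [← Int.cast_smul_eq_zsmul ℝ (-(k*m)), ← Int.cast_smul_eq_zsmul ℝ m, smul_smul]
    push_cast
    rw [neg_smul]
    abel
  rw [heq]
  exact htr
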